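/- Let N be a natural number, and suppose the coefficient functions t ↦ v̂_k(t) ∈ ℂ, |k| ≤ N, are differentiable with v̂_{−k}(t) = conj(v̂_k(t)), so that v_N(x,t) := Σ_{|k|≤N} v̂_k(t) e^{ikx} is real-valued. If v_N satisfies the Fourier–Galerkin approximation of the inviscid Burgers equation, ∂_t v_N(x,t) + ∂_x [P_N(v_N(·,t)²/2)](x) = 0 for all x and all t ≥ 0, then the L² norm is conserved: ‖v_N(·,t)‖_{L²(0,2π)} = ‖v_N(·,0)‖_{L²(0,2π)} for all t ≥ 0. -/

import Mathlib

open MeasureTheory intervalIntegral Complex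

/-- The `k`-th Fourier coefficient `ŵ_k = (1/2π)∫_0^{2π} w(y) e^{−iky} dy`. -/
noncomputable def fourierCoef (w : ℝ → ℂ) (k : ℤ) : ℂ :=
  (1 / (2 * Real.pi)) * ∫ y in (0 : ℝ)..(2 * Real.pi), w y * Complex.exp (-Complex.I * k * y)

/-- The Fourier projection `P_N w(x) = Σ_{|k|≤N} ŵ_k e^{ikx}` onto frequencies `|k| ≤ N`. -/
noncomputable def fourierProj (N : ℕ) (w : ℝ → ℂ) (x : ℝ) : ℂ :=
  ∑ k ∈ Finset.Icc (-(N : ℤ)) (N : ℤ), fourierCoef w k * Complex.exp (Complex.I * k * x)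

lemma integral_cexp_int (n : ℤ) :
    ∫ x in (0:ℝ)..(2*Real.pi), Complex.exp (Complex.I * n * x)
      = if n = 0 then ((2*Real.pi : ℝ) : ℂ) else 0 := by
  rcases eq_or_ne n 0 with h | h
  · simp [h]
  · have hc : Complex.I * (n : ℂ) ≠ 0 :=
      mul_ne_zero Complex.I_ne_zero (by exact_mod_cast h)
    rw [if_neg h, integral_exp_mul_complex hc]
    have h1 : Complex.exp (Complex.I * n * ((2*Real.pi : ℝ):ℂ)) = 1 := by
      rw [show Complex.I * (n:ℂ) * ((2*Real.pi : ℝ):ℂ)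
          = (n:ℂ) * (2 * (Real.pi:ℂ) * Complex.I) by push_cast; ring]
      exact Complex.exp_int_mul_two_pi_mul_I n
    push_cast at h1 ⊢
    rw [h1]
    simp

lemma cont_cexp (a : ℂ) (m : ℂ) : Continuous (fun x : ℝ => a * Complex.exp (m * x)) :=
  continuous_const.mul (Complex.continuous_exp.comp (continuous_const.mul Complex.continuous_ofReal))

lemma fourierCoef_sum {α : Type*} (s : Finset α) (a : α → ℂ) (n : α → ℤ) (j : ℤ) :
    fourierCoef (fun x => ∑ p ∈ s, a p * Complex.exp (Complex.I * (n p) * x)) j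
      = ∑ p ∈ s, if n p = j then a p else 0 := by
  unfold fourierCoef
  have hpt : ∀ y : ℝ, (∑ p ∈ s, a p * Complex.exp (Complex.I * n p * y)) *
      Complex.exp (-Complex.I * j * y)
      = ∑ p ∈ s, a p * Complex.exp (Complex.I * ((n p - j : ℤ) : ℂ) * y) := by
    intro y
    rw [Finset.sum_mul]
    refine Finset.sum_congr rfl fun p _ => ?_
    rw [mul_assoc, ← Complex.exp_add]
    congr 1
    push_cast
    ring
  rw [intervalIntegral.integral_congr (g := fun y =>
      ∑ p ∈ s, a p * Complex.exp (Complex.I * ((n p - j : ℤ):ℂ) * y)) (fun y _ => hpt y)]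
  rw [intervalIntegral.integral_finset_sum
    (fun p _ => (Continuous.intervalIntegrable (cont_cexp _ _) _ _))]
  have : ∀ p ∈ s, (∫ y in (0:ℝ)..(2*Real.pi),
        a p * Complex.exp (Complex.I * ((n p - j : ℤ):ℂ) * y))
      = if n p = j then a p * ((2*Real.pi:ℝ):ℂ) else 0 := by
    intro p _
    rw [intervalIntegral.integral_const_mul, integral_cexp_int]
    simp [sub_eq_zero, mul_ite]
  rw [Finset.sum_congr rfl this, Finset.mul_sum]
  refine Finset.sum_congr rfl fun p _ => ?_
  have hpi : ((2*Real.pi:ℝ):ℂ) ≠ 0 := by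
    push_cast; simp [Real.pi_ne_zero]
  split_ifs
  · push_cast at hpi ⊢
    field_simp
  · simp

lemma hasDerivAt_trigPoly {α : Type*} (s : Finset α) (a : α → ℂ) (n : α → ℤ) (x : ℝ) :
    HasDerivAt (fun y : ℝ => ∑ p ∈ s, a p * Complex.exp (Complex.I * n p * y))
      (∑ p ∈ s, a p * (Complex.I * n p) * Complex.exp (Complex.I * n p * x)) x := by
  apply HasDerivAt.fun_sum
  intro p _
  have h1 : HasDerivAt (fun y : ℝ => (Complex.I * n p) * (y : ℂ)) (Complex.I * n p) x := by
    simpa using (Complex.ofRealCLM.hasDerivAt (x := x)).const_mul (Complex.I * (n p : ℂ))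
  have h2 := (h1.cexp).const_mul (a p)
  exact h2.congr_deriv (by ring)

lemma sum_neg_Icc {M : Type*} [AddCommMonoid M] (f : ℤ → M) (N : ℕ) :
    ∑ k ∈ Finset.Icc (-(N:ℤ)) (N:ℤ), f (-k) = ∑ k ∈ Finset.Icc (-(N:ℤ)) (N:ℤ), f k := by
  apply Finset.sum_nbij' (i := fun k => -k) (j := fun k => -k) <;>
    intros <;> simp_all [Finset.mem_Icc] <;> omega

lemma T_zero (K : Finset ℤ) (d : ℤ → ℂ) :
    ∑ m ∈ K, ∑ j ∈ K, ∑ l ∈ K,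
      (if j + l + m = 0 then (m:ℂ) * (d j * d l * d m) else 0) = 0 := by
  classical
  set P : Finset (ℤ × ℤ × ℤ) := K ×ˢ K ×ˢ K with hP
  have hmem : ∀ p : ℤ × ℤ × ℤ, p ∈ P ↔ p.1 ∈ K ∧ p.2.1 ∈ K ∧ p.2.2 ∈ K := by
    intro p; simp [hP, Finset.mem_product]
  have hprod : ∀ (F : ℤ → ℤ → ℤ → ℂ),
      (∑ m ∈ K, ∑ j ∈ K, ∑ l ∈ K, F m j l) = ∑ p ∈ P, F p.1 p.2.1 p.2.2 := by
    intro F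
    rw [Finset.sum_product, Finset.sum_congr rfl]
    intro m _
    rw [Finset.sum_product]
  set G : ℤ → ℤ → ℤ → ℂ :=
    fun m j l => if j + l + m = 0 then (m:ℂ) * (d j * d l * d m) else 0 with hG
  have swap12 : ∑ p ∈ P, G p.1 p.2.1 p.2.2 = ∑ p ∈ P, G p.2.1 p.1 p.2.2 := by
    apply Finset.sum_nbij' (i := fun p => (p.2.1, p.1, p.2.2))
      (j := fun p => (p.2.1, p.1, p.2.2)) <;>
      rintro ⟨a, b, e⟩ hp <;> try rfl
    all_goals rw [hmem] at *; tauto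
  have swap13 : ∑ p ∈ P, G p.1 p.2.1 p.2.2 = ∑ p ∈ P, G p.2.2 p.2.1 p.1 := by
    apply Finset.sum_nbij' (i := fun p => (p.2.2, p.2.1, p.1))
      (j := fun p => (p.2.2, p.2.1, p.1)) <;>
      rintro ⟨a, b, e⟩ hp <;> try rfl
    all_goals rw [hmem] at *; tauto
  have hsum : (3 : ℂ) * (∑ p ∈ P, G p.1 p.2.1 p.2.2) = ∑ p ∈ P,
      (G p.1 p.2.1 p.2.2 + G p.2.1 p.1 p.2.2 + G p.2.2 p.2.1 p.1) := by
    rw [Finset.sum_add_distrib, Finset.sum_add_distrib, ← swap12, ← swap13]; ring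
  have hzero : ∀ p : ℤ × ℤ × ℤ,
      G p.1 p.2.1 p.2.2 + G p.2.1 p.1 p.2.2 + G p.2.2 p.2.1 p.1 = 0 := by
    rintro ⟨m, j, l⟩
    simp only [hG]
    rcases eq_or_ne (j + l + m) 0 with h | h
    · rw [if_pos h, if_pos (by omega), if_pos (by omega)]
      have h0 : ((m:ℂ) + j + l) = 0 := by
        have : ((m:ℂ) + j + l) = ((j + l + m : ℤ) : ℂ) := by push_cast; ring
        rw [this, h]; simp
      have hr : (m:ℂ) * (d j * d l * d m) + (j:ℂ) * (d m * d l * d j)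
            + (l:ℂ) * (d j * d m * d l)
          = ((m:ℂ) + j + l) * (d j * d l * d m) := by ring
      rw [hr, h0, zero_mul]
    · rw [if_neg h, if_neg (by omega), if_neg (by omega)]
      simp
  have hS : ∑ p ∈ P, (G p.1 p.2.1 p.2.2 + G p.2.1 p.1 p.2.2 + G p.2.2 p.2.1 p.1) = 0 :=
    Finset.sum_eq_zero fun p _ => hzero p
  rw [hprod G]
  rcases mul_eq_zero.mp (hsum.trans hS) with h | h
  · norm_num at h
  · exact h

/-- The Fourier–Galerkin (spectral) method for the inviscid Burgers equation conserves
the `L²(0,2π)` norm: if `v_N(x,t) = Σ_{|k|≤N} v̂_k(t)e^{ikx}` is real-valued with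
differentiable coefficients and satisfies `∂_t v_N + ∂_x P_N(v_N²/2) = 0` for all `x`
and all `t ≥ 0`, then `‖v_N(·,t)‖_{L²(0,2π)} = ‖v_N(·,0)‖_{L²(0,2π)}` for all `t ≥ 0`. -/
theorem fourier_galerkin_burgers_L2_conservation
    (N : ℕ) (c : ℤ → ℝ → ℂ)
    (hdiff : ∀ k : ℤ, Differentiable ℝ (c k))
    (hreal : ∀ (k : ℤ) (t : ℝ), c (-k) t = starRingEnd ℂ (c k t))
    (vN : ℝ → ℝ → ℂ)
    (hvN : ∀ (x t : ℝ), vN x t = ∑ k ∈ Finset.Icc (-(N : ℤ)) (N : ℤ),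
      c k t * Complex.exp (Complex.I * k * x))
    (hpde : ∀ (x : ℝ) (t : ℝ), 0 ≤ t →
      deriv (fun s => vN x s) t +
        deriv (fun y => fourierProj N (fun z => (vN z t) ^ 2 / 2) y) x = 0) :
    ∀ t : ℝ, 0 ≤ t →
      Real.sqrt (∫ x in (0 : ℝ)..(2 * Real.pi), ‖vN x t‖ ^ 2)
        = Real.sqrt (∫ x in (0 : ℝ)..(2 * Real.pi), ‖vN x 0‖ ^ 2) := by
  classical
  set K : Finset ℤ := Finset.Icc (-(N : ℤ)) (N : ℤ) with hK
  have hKneg : ∀ k ∈ K, -k ∈ K := by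
    intro k hk; simp only [hK, Finset.mem_Icc] at *; omega
  set W : ℤ → ℝ → ℂ := fun k t => fourierCoef (fun z => (vN z t) ^ 2 / 2) k with hWdef
  -- the square as a trigonometric polynomial
  have hvsq : ∀ t : ℝ, (fun z : ℝ => (vN z t) ^ 2 / 2) = fun z : ℝ =>
      ∑ p ∈ K ×ˢ K, (c p.1 t * c p.2 t / 2) *
        Complex.exp (Complex.I * ((p.1 + p.2 : ℤ) : ℂ) * z) := by
    intro t
    funext z
    rw [hvN z t, sq, Finset.sum_mul_sum, Finset.sum_product, Finset.sum_div]
    refine Finset.sum_congr rfl fun j _ => ?_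
    rw [Finset.sum_div]
    refine Finset.sum_congr rfl fun l _ => ?_
    rw [mul_mul_mul_comm, ← Complex.exp_add]
    push_cast
    ring
  have hW : ∀ (k : ℤ) (t : ℝ), W k t
      = ∑ p ∈ K ×ˢ K, if p.1 + p.2 = k then c p.1 t * c p.2 t / 2 else 0 := by
    intro k t
    have := fourierCoef_sum (K ×ˢ K) (fun p => c p.1 t * c p.2 t / 2)
      (fun p => p.1 + p.2) k
    rw [hWdef]
    simp only []
    rw [hvsq t]
    exact this
  -- ODE for the coefficients
  have hODE : ∀ t : ℝ, 0 ≤ t → ∀ k ∈ K, deriv (c k) t = -(Complex.I * k) * W k t := by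
    intro t ht k hk
    have hx : ∀ x : ℝ, ∑ j ∈ K,
        (deriv (c j) t + Complex.I * j * W j t) * Complex.exp (Complex.I * j * x) = 0 := by
      intro x
      have hdt : HasDerivAt (fun s => vN x s)
          (∑ j ∈ K, deriv (c j) t * Complex.exp (Complex.I * j * x)) t := by
        have hfe : (fun s => vN x s)
            = fun s => ∑ j ∈ K, c j s * Complex.exp (Complex.I * j * x) :=
          funext fun s => hvN x s
        rw [hfe]
        exact HasDerivAt.fun_sum fun j _ => ((hdiff j t).hasDerivAt).mul_const _
      have hdx : deriv (fun y => fourierProj N (fun z => (vN z t) ^ 2 / 2) y) x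
          = ∑ j ∈ K, W j t * (Complex.I * j) * Complex.exp (Complex.I * j * x) := by
        have : (fun y => fourierProj N (fun z => (vN z t) ^ 2 / 2) y)
            = fun y : ℝ => ∑ j ∈ K, W j t * Complex.exp (Complex.I * j * y) := by
          funext y
          rw [fourierProj]
        rw [this]
        exact (hasDerivAt_trigPoly K (fun j => W j t) (fun j => j) x).deriv
      have h := hpde x t ht
      rw [hdt.deriv, hdx, ← Finset.sum_add_distrib] at h
      rw [← h]
      refine Finset.sum_congr rfl fun j _ => ?_
      ring
    have h0 : fourierCoef (fun x => ∑ j ∈ K,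
        (deriv (c j) t + Complex.I * j * W j t) * Complex.exp (Complex.I * j * x)) k = 0 := by
      have hfe : (fun x : ℝ => ∑ j ∈ K,
          (deriv (c j) t + Complex.I * j * W j t) * Complex.exp (Complex.I * j * x))
          = fun _ => (0 : ℂ) := funext hx
      rw [hfe]
      unfold fourierCoef
      simp
    have h1 := fourierCoef_sum K (fun j => deriv (c j) t + Complex.I * j * W j t)
      (fun j => j) k
    rw [h0] at h1
    rw [Finset.sum_ite_eq' K k (fun j => deriv (c j) t + Complex.I * j * W j t),
      if_pos hk] at h1
    have : deriv (c k) t + Complex.I * k * W k t = 0 := h1.symm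
    linear_combination this
  -- the quadratic sum S vanishes
  have hS : ∀ t : ℝ, ∑ k ∈ K, (Complex.I * k) * W k t * c (-k) t = 0 := by
    intro t
    have hterm : ∀ k : ℤ, (Complex.I * k) * W k t * c (-k) t
        = Complex.I * ∑ j ∈ K, ∑ l ∈ K,
            (if j + l = k then ((k:ℂ)/2) * (c j t * c l t * c (-k) t) else 0) := by
      intro k
      rw [hW k t, Finset.sum_product]
      simp only [Finset.mul_sum, Finset.sum_mul]
      refine Finset.sum_congr rfl fun j _ => Finset.sum_congr rfl fun l _ => ?_
      split_ifs
      · ring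
      · simp
    rw [Finset.sum_congr rfl fun k _ => hterm k, ← Finset.mul_sum]
    have : ∑ k ∈ K, ∑ j ∈ K, ∑ l ∈ K,
        (if j + l = k then ((k:ℂ)/2) * (c j t * c l t * c (-k) t) else 0) = 0 := by
      rw [← sum_neg_Icc (fun k => ∑ j ∈ K, ∑ l ∈ K,
        (if j + l = k then ((k:ℂ)/2) * (c j t * c l t * c (-k) t) else 0)) N]
      have heq : ∀ m ∈ K, (∑ j ∈ K, ∑ l ∈ K,
          (if j + l = -m then (((-m : ℤ):ℂ)/2) * (c j t * c l t * c (-(-m)) t) else 0))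
          = (-(1:ℂ)/2) * ∑ j ∈ K, ∑ l ∈ K,
            (if j + l + m = 0 then (m:ℂ) * (c j t * c l t * c m t) else 0) := by
        intro m _
        rw [Finset.mul_sum]
        refine Finset.sum_congr rfl fun j _ => ?_
        rw [Finset.mul_sum]
        refine Finset.sum_congr rfl fun l _ => ?_
        have hc : (j + l = -m) ↔ (j + l + m = 0) := by omega
        rw [if_congr hc rfl rfl]
        split_ifs
        · push_cast
          rw [neg_neg]
          ring
        · simp
      rw [show (∑ k ∈ K, ∑ j ∈ K, ∑ l ∈ K,
          (if j + l = -k then (((-k : ℤ):ℂ)/2) * (c j t * c l t * c (-(-k)) t) else 0))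
          = ∑ m ∈ K, (-(1:ℂ)/2) * ∑ j ∈ K, ∑ l ∈ K,
            (if j + l + m = 0 then (m:ℂ) * (c j t * c l t * c m t) else 0)
        from Finset.sum_congr rfl heq]
      rw [← Finset.mul_sum, T_zero K (fun k => c k t), mul_zero]
    rw [this, mul_zero]
  -- energy function
  set E : ℝ → ℂ := fun t => ∑ k ∈ K, c k t * c (-k) t with hE
  have hEc : ∀ t : ℝ, 0 ≤ t → E t = E 0 := by
    have hEd : ∀ t : ℝ, HasDerivAt E
        (∑ k ∈ K, (deriv (c k) t * c (-k) t + c k t * deriv (c (-k)) t)) t := by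
      intro t
      exact HasDerivAt.fun_sum fun k _ => ((hdiff k t).hasDerivAt.mul ((hdiff (-k)) t).hasDerivAt)
    have hE0 : ∀ t : ℝ, 0 ≤ t → deriv E t = 0 := by
      intro t ht
      rw [(hEd t).deriv]
      have hterm : ∀ k ∈ K, deriv (c k) t * c (-k) t + c k t * deriv (c (-k)) t
          = -((Complex.I * k) * W k t * c (-k) t) + (Complex.I * k) * c k t * W (-k) t := by
        intro k hk
        rw [hODE t ht k hk, hODE t ht (-k) (hKneg k hk)]
        push_cast
        ring
      rw [Finset.sum_congr rfl hterm, Finset.sum_add_distrib]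
      have h2 : ∑ k ∈ K, (Complex.I * k) * c k t * W (-k) t
          = ∑ k ∈ K, -((Complex.I * k) * W k t * c (-k) t) := by
        rw [← sum_neg_Icc (fun k => (Complex.I * k) * c k t * W (-k) t) N]
        refine Finset.sum_congr rfl fun k _ => ?_
        push_cast
        ring
      rw [h2, Finset.sum_neg_distrib, hS t]
      simp
    intro t ht
    rcases eq_or_lt_of_le ht with h | h
    · rw [← h]
    · have hdOn : DifferentiableOn ℝ E (Set.Icc 0 t) :=
        fun x _ => (HasDerivAt.differentiableAt (hEd x)).differentiableWithinAt
      have := constant_of_derivWithin_zero hdOn (fun x hx => ?_) t (Set.mem_Icc.mpr ⟨ht, le_refl t⟩)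
      · exact this
      · rw [(HasDerivAt.differentiableAt (hEd x)).derivWithin
          ((uniqueDiffOn_Icc h) x (Set.mem_Icc_of_Ico hx))]
        exact hE0 x hx.1
  -- the L² norm as the coefficient sum
  have hInt : ∀ t : ℝ,
      ((∫ x in (0:ℝ)..(2*Real.pi), ‖vN x t‖ ^ 2 : ℝ) : ℂ)
        = ((2*Real.pi : ℝ) : ℂ) * E t := by
    intro t
    have hprod : (fun x : ℝ => vN x t * (starRingEnd ℂ) (vN x t)) = fun x : ℝ =>
        ∑ p ∈ K ×ˢ K, (c p.1 t * c (-p.2) t) *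
          Complex.exp (Complex.I * ((p.1 - p.2 : ℤ) : ℂ) * x) := by
      funext x
      have hconj : (starRingEnd ℂ) (vN x t)
          = ∑ k ∈ K, c (-k) t * Complex.exp (-(Complex.I * k * x)) := by
        rw [hvN x t, map_sum]
        refine Finset.sum_congr rfl fun k _ => ?_
        rw [map_mul, ← hreal k t, ← Complex.exp_conj]
        congr 1
        simp [Complex.conj_I, Complex.conj_ofReal]
      rw [hconj, hvN x t, Finset.sum_mul_sum, Finset.sum_product]
      refine Finset.sum_congr rfl fun j _ => ?_
      refine Finset.sum_congr rfl fun l _ => ?_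
      rw [mul_mul_mul_comm, ← Complex.exp_add]
      push_cast
      ring
    have habs : (fun x : ℝ => ((‖vN x t‖ ^ 2 : ℝ) : ℂ))
        = fun x => vN x t * (starRingEnd ℂ) (vN x t) := by
      funext x
      rw [Complex.sq_norm, Complex.mul_conj]
    have hio : ((∫ x in (0:ℝ)..(2*Real.pi), ‖vN x t‖ ^ 2 : ℝ) : ℂ)
        = ∫ x in (0:ℝ)..(2*Real.pi), ((‖vN x t‖ ^ 2 : ℝ) : ℂ) :=
      (intervalIntegral.integral_ofReal).symm
    rw [hio]
    have : (∫ x in (0:ℝ)..(2*Real.pi), ((‖vN x t‖ ^ 2 : ℝ) : ℂ))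
        = ∫ x in (0:ℝ)..(2*Real.pi), ∑ p ∈ K ×ˢ K, (c p.1 t * c (-p.2) t) *
          Complex.exp (Complex.I * ((p.1 - p.2 : ℤ) : ℂ) * x) := by
      rw [show (fun x : ℝ => ((‖vN x t‖ ^ 2 : ℝ) : ℂ)) = _ from habs.trans hprod]
    rw [this]
    rw [intervalIntegral.integral_finset_sum
      (fun p _ => (Continuous.intervalIntegrable (cont_cexp _ _) _ _))]
    have hterm : ∀ p ∈ K ×ˢ K, (∫ x in (0:ℝ)..(2*Real.pi), (c p.1 t * c (-p.2) t) *
        Complex.exp (Complex.I * ((p.1 - p.2 : ℤ) : ℂ) * x))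
        = if p.1 = p.2 then ((2*Real.pi:ℝ):ℂ) * (c p.1 t * c (-p.2) t) else 0 := by
      intro p _
      rw [intervalIntegral.integral_const_mul, integral_cexp_int]
      rcases eq_or_ne p.1 p.2 with h | h
      · rw [if_pos (sub_eq_zero.mpr h), if_pos h]; ring
      · rw [if_neg (fun hc => h (sub_eq_zero.mp hc)), if_neg h, mul_zero]
    rw [Finset.sum_congr rfl hterm, Finset.sum_product]
    rw [hE, Finset.mul_sum]
    refine Finset.sum_congr rfl fun j hj => ?_
    rw [show (∑ l ∈ K, if j = l then ((2*Real.pi:ℝ):ℂ) * (c j t * c (-l) t) else 0)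
        = if j ∈ K then ((2*Real.pi:ℝ):ℂ) * (c j t * c (-j) t) else 0
      from Finset.sum_ite_eq K j (fun l => ((2*Real.pi:ℝ):ℂ) * (c j t * c (-l) t))]
    rw [if_pos hj]
  intro t ht
  have h2 : ((∫ x in (0:ℝ)..(2*Real.pi), ‖vN x t‖ ^ 2 : ℝ) : ℂ)
      = ((∫ x in (0:ℝ)..(2*Real.pi), ‖vN x 0‖ ^ 2 : ℝ) : ℂ) := by
    rw [hInt t, hInt 0, hEc t ht]
  have hre : (∫ x in (0:ℝ)..(2*Real.pi), ‖vN x t‖ ^ 2 : ℝ)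
      = (∫ x in (0:ℝ)..(2*Real.pi), ‖vN x 0‖ ^ 2 : ℝ) := by
    exact_mod_cast h2
  rw [hre]
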